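/- Let X be n×k of rank k, Z be n×(n−k) with X^T Z = 0 and rank n−k, and suppose Ω = X Γ X^T + Z Δ Z^T with Γ positive definite and Δ positive definite (Rao's covariance structure). Then X^T Ω^{-1} X = Γ^{-1}, and equivalently X^T Ω Z = 0 and X^T Ω^{-1} Z = 0. -/

import Mathlib

open Matrix

lemma aux_isUnit {m : ℕ} (A : Matrix (Fin m) (Fin m) ℝ) (h : A.rank = m) : IsUnit A := by
  rw [← Matrix.mulVec_injective_iff_isUnit]
  have hsurj : Function.Surjective A.mulVecLin := by
    rw [← LinearMap.range_eq_top]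
    apply Submodule.eq_top_of_finrank_eq
    simpa [Matrix.rank] using h
  have : Function.Injective A.mulVecLin :=
    (LinearMap.injective_iff_surjective).mpr hsurj
  exact this

-- zero absorption in right-assoc form
lemma aux_zero {n j : ℕ} {p : Type*} [Fintype p]
    (X : Matrix (Fin n) (Fin j) ℝ) (Z : Matrix (Fin n) p ℝ) (h : Xᵀ * Z = 0)
    {q : Type*} [Fintype q] (M : Matrix p q ℝ) : Xᵀ * (Z * M) = 0 := by
  rw [← Matrix.mul_assoc, h, Matrix.zero_mul]

-- (XᵀX)⁻¹ * (Xᵀ * (X * M)) = M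
lemma aux_cancel1 {n j : ℕ} (X : Matrix (Fin n) (Fin j) ℝ) (h : IsUnit (Xᵀ * X))
    {q : Type*} [Fintype q] (M : Matrix (Fin j) q ℝ) :
    (Xᵀ * X)⁻¹ * (Xᵀ * (X * M)) = M := by
  rw [← Matrix.mul_assoc Xᵀ X M, ← Matrix.mul_assoc,
    Matrix.nonsing_inv_mul _ ((Matrix.isUnit_iff_isUnit_det _).mp h), Matrix.one_mul]

-- Xᵀ * (X * ((XᵀX)⁻¹ * M)) = M
lemma aux_cancel2 {n j : ℕ} (X : Matrix (Fin n) (Fin j) ℝ) (h : IsUnit (Xᵀ * X))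
    {q : Type*} [Fintype q] (M : Matrix (Fin j) q ℝ) :
    Xᵀ * (X * ((Xᵀ * X)⁻¹ * M)) = M := by
  rw [← Matrix.mul_assoc, ← Matrix.mul_assoc,
    Matrix.mul_nonsing_inv _ ((Matrix.isUnit_iff_isUnit_det _).mp h), Matrix.one_mul]

-- G * (G⁻¹ * M) = M
lemma aux_cancel3 {j : ℕ} (G : Matrix (Fin j) (Fin j) ℝ) (h : IsUnit G.det)
    {q : Type*} [Fintype q] (M : Matrix (Fin j) q ℝ) :
    G * (G⁻¹ * M) = M := by
  rw [← Matrix.mul_assoc, Matrix.mul_nonsing_inv _ h, Matrix.one_mul]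

lemma aux_cancel4 {j : ℕ} (G : Matrix (Fin j) (Fin j) ℝ) (h : IsUnit G.det)
    {q : Type*} [Fintype q] (M : Matrix (Fin j) q ℝ) :
    G⁻¹ * (G * M) = M := by
  rw [← Matrix.mul_assoc, Matrix.nonsing_inv_mul _ h, Matrix.one_mul]

theorem stmt_8 {n k : ℕ} (hnk : k < n)
    (X : Matrix (Fin n) (Fin k) ℝ) (hX : X.rank = k)
    (Z : Matrix (Fin n) (Fin (n - k)) ℝ) (hXZ : Xᵀ * Z = 0) (hZ : Z.rank = n - k)
    (Γ : Matrix (Fin k) (Fin k) ℝ) (hΓ : Γ.PosDef)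
    (Δ : Matrix (Fin (n - k)) (Fin (n - k)) ℝ) (hΔ : Δ.PosDef)
    (Ω : Matrix (Fin n) (Fin n) ℝ) (hΩrep : Ω = X * Γ * Xᵀ + Z * Δ * Zᵀ)
    (hΩ : Ω.PosDef) :
    Xᵀ * Ω⁻¹ * X = Γ⁻¹ ∧ Xᵀ * Ω * Z = 0 ∧ Xᵀ * Ω⁻¹ * Z = 0 := by
  have hZX : Zᵀ * X = 0 := by
    have := congrArg Matrix.transpose hXZ
    simpa [Matrix.transpose_mul] using this
  have hA : IsUnit (Xᵀ * X) := by
    apply aux_isUnit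
    rw [Matrix.rank_transpose_mul_self, hX]
  have hB : IsUnit (Zᵀ * Z) := by
    apply aux_isUnit
    rw [Matrix.rank_transpose_mul_self, hZ]
  have hAd : IsUnit (Xᵀ * X).det := (Matrix.isUnit_iff_isUnit_det _).mp hA
  have hBd : IsUnit (Zᵀ * Z).det := (Matrix.isUnit_iff_isUnit_det _).mp hB
  have hΓd : IsUnit Γ.det := hΓ.det_pos.ne'.isUnit
  have hΔd : IsUnit Δ.det := hΔ.det_pos.ne'.isUnit
  have hΩd : IsUnit Ω.det := hΩ.det_pos.ne'.isUnit
  set A := Xᵀ * X with hAdef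
  set B := Zᵀ * Z with hBdef
  set Ω' := X * A⁻¹ * Γ⁻¹ * A⁻¹ * Xᵀ + Z * B⁻¹ * Δ⁻¹ * B⁻¹ * Zᵀ with hΩ'def
  set S := X * A⁻¹ * Xᵀ + Z * B⁻¹ * Zᵀ with hSdef
  have hΩΩ' : Ω * Ω' = S := by
    rw [hΩrep, hΩ'def, hSdef, hAdef, hBdef]
    simp only [Matrix.add_mul, Matrix.mul_add, Matrix.mul_assoc,
      aux_zero X Z hXZ, aux_zero Z X hZX, aux_cancel2 X hA, aux_cancel2 Z hB,
      aux_cancel3 Γ hΓd, aux_cancel3 Δ hΔd,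
      Matrix.mul_zero, Matrix.zero_mul, add_zero, zero_add]
  have hSΩ : S * Ω = Ω := by
    rw [hΩrep, hSdef, hAdef, hBdef]
    simp only [Matrix.add_mul, Matrix.mul_add, Matrix.mul_assoc,
      aux_zero X Z hXZ, aux_zero Z X hZX, aux_cancel1 X hA, aux_cancel1 Z hB,
      Matrix.mul_zero, Matrix.zero_mul, add_zero, zero_add]
  have hleft : Ω' * Ω = 1 := by
    have h1 : Ω * Ω' * Ω = Ω := by rw [hΩΩ', hSΩ]
    calc Ω' * Ω = 1 * (Ω' * Ω) := by rw [Matrix.one_mul]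
      _ = Ω⁻¹ * Ω * (Ω' * Ω) := by rw [Matrix.nonsing_inv_mul _ hΩd]
      _ = Ω⁻¹ * (Ω * Ω' * Ω) := by simp only [Matrix.mul_assoc]
      _ = Ω⁻¹ * Ω := by rw [h1]
      _ = 1 := Matrix.nonsing_inv_mul _ hΩd
  have hinv : Ω⁻¹ = Ω' := Matrix.inv_eq_left_inv hleft
  refine ⟨?_, ?_, ?_⟩
  · rw [hinv, hΩ'def, hAdef, hBdef]
    simp only [Matrix.add_mul, Matrix.mul_add, Matrix.mul_assoc,
      aux_zero X Z hXZ, aux_zero Z X hZX, aux_cancel2 X hA,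
      aux_cancel4 Γ hΓd, hXZ, hZX,
      Matrix.mul_zero, Matrix.zero_mul, add_zero, zero_add]
    rw [Matrix.nonsing_inv_mul _ hAd, Matrix.mul_one]
  · rw [hΩrep]
    simp only [Matrix.add_mul, Matrix.mul_add, Matrix.mul_assoc,
      aux_zero X Z hXZ, hXZ, Matrix.mul_zero, Matrix.zero_mul, add_zero, zero_add]
  · rw [hinv, hΩ'def]
    simp only [Matrix.add_mul, Matrix.mul_add, Matrix.mul_assoc,
      aux_zero X Z hXZ, hXZ, Matrix.mul_zero, Matrix.zero_mul, add_zero, zero_add]
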